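/- Let R be a finite commutative symmetric ℤ/n-algebra with non-degenerate functional ψ, and let D = {Rx₁,…,Rx_k} be a set of nonzero principal ideals defining the gcd-graph G_R(D) with connection set S = {s : Rs = Rx_i for some i}. Then the eigenvalues of the adjacency matrix of G_R(D) are {λ_g}_{g ∈ R}, where λ_g = Σ_{i=1}^k c(g, R/Ann_R(x_i)) and c(g, R/Ann_R(x_i)) = Σ_{u ∈ (R/Ann_R(x_i))×} ζ_n^{ψ(g û x_i)} for lifts û of u to R×. -/

import Mathlib

open scoped Classical

open Polynomial Matrix in
private lemma charpoly_conj_aux {m : Type*} [DecidableEq m] [Fintype m] {K : Type*} [CommRing K]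
    (U V A : Matrix m m K) (hUV : U * V = 1) (hVU : V * U = 1) :
    (V * A * U).charpoly = A.charpoly := by
  have hmapVU : (C : K →+* K[X]).mapMatrix V * (C : K →+* K[X]).mapMatrix U = 1 := by
    rw [← RingHom.map_mul, hVU, RingHom.map_one]
  have hscal : (C : K →+* K[X]).mapMatrix V * Matrix.scalar m (X : K[X]) *
      (C : K →+* K[X]).mapMatrix U = Matrix.scalar m (X : K[X]) := by
    rw [mul_assoc, (scalar_commute (X : K[X]) (Commute.all X) _).eq, ← mul_assoc, hmapVU,
      one_mul]
  have key : charmatrix (V * A * U) =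
      (C : K →+* K[X]).mapMatrix V * charmatrix A * (C : K →+* K[X]).mapMatrix U := by
    unfold charmatrix
    rw [RingHom.map_mul, RingHom.map_mul, mul_sub, sub_mul]
    rw [hscal, mul_assoc]
  rw [Matrix.charpoly, Matrix.charpoly, key, det_mul, det_mul]
  have h1 : ((C : K →+* K[X]).mapMatrix V).det * ((C : K →+* K[X]).mapMatrix U).det = 1 := by
    rw [← det_mul, hmapVU, det_one]
  calc ((C : K →+* K[X]).mapMatrix V).det * (charmatrix A).det *
        ((C : K →+* K[X]).mapMatrix U).det
      = (charmatrix A).det * (((C : K →+* K[X]).mapMatrix V).det *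
        ((C : K →+* K[X]).mapMatrix U).det) := by ring
    _ = (charmatrix A).det := by rw [h1, mul_one]

open Polynomial Matrix in
private lemma charpoly_diagonal_aux {m : Type*} [DecidableEq m] [Fintype m] {K : Type*}
    [CommRing K] (d : m → K) :
    (Matrix.diagonal d).charpoly = ∏ i, (X - C (d i)) := by
  have h : charmatrix (Matrix.diagonal d) = Matrix.diagonal fun i => X - C (d i) := by
    ext i j
    by_cases hij : i = j
    · subst hij; simp
    · rw [charmatrix_apply_ne _ _ _ hij, Matrix.diagonal_apply_ne _ hij,
        Matrix.diagonal_apply_ne _ hij, map_zero, neg_zero]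
  rw [Matrix.charpoly, h, Matrix.det_diagonal]

/-- Spectrum of a gcd-graph over a finite symmetric `ℤ/n`-algebra: the characteristic
polynomial of the adjacency matrix of `G_R(D)`, `D = {Rx₁,…,Rx_k}`, is
`∏_{g ∈ R} (X - λ_g)` where `λ_g = Σ_i c(g, R/Ann_R(x_i))` and
`c(g, R/Ann_R(x_i)) = Σ_{u ∈ (R/Ann_R(x_i))ˣ} ζ^{ψ(g û x_i)}` for lifts `û ∈ Rˣ` of `u`. -/
theorem stmt_18 {n : ℕ} {R : Type*} [CommRing R] [Fintype R] [Algebra (ZMod n) R]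
    (ψ : R →ₗ[ZMod n] ZMod n)
    (hψ : ∀ I : Ideal R, (∀ a ∈ I, ψ a = 0) → I = ⊥)
    (ζ : ℂ) (hζ : IsPrimitiveRoot ζ n)
    (k : ℕ) (x : Fin k → R) (hx : ∀ i, x i ≠ 0)
    (hinj : Function.Injective (fun i => Ideal.span ({x i} : Set R)))
    (lift : ∀ i : Fin k, (R ⧸ Ideal.torsionOf R R (x i))ˣ → Rˣ)
    (hlift : ∀ (i : Fin k) (u : (R ⧸ Ideal.torsionOf R R (x i))ˣ),
      Ideal.Quotient.mk (Ideal.torsionOf R R (x i)) ((lift i u : Rˣ) : R) =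
        ((u : (R ⧸ Ideal.torsionOf R R (x i))ˣ) : R ⧸ Ideal.torsionOf R R (x i))) :
    Matrix.charpoly
        ((SimpleGraph.fromRel
          (fun a b : R => ∃ i, Ideal.span ({a - b} : Set R) = Ideal.span ({x i} : Set R))).adjMatrix ℂ)
      = ∏ g : R, (Polynomial.X - Polynomial.C
          (∑ i : Fin k, ∑ u : (R ⧸ Ideal.torsionOf R R (x i))ˣ,
            ζ ^ (ψ (g * ((lift i u : Rˣ) : R) * x i)).val)) := by
  classical
  set G := SimpleGraph.fromRel
      (fun a b : R => ∃ i, Ideal.span ({a - b} : Set R) = Ideal.span ({x i} : Set R)) with hG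
  by_cases hR : Subsingleton R
  · haveI := hR
    haveI : IsEmpty (Fin k) := ⟨fun i => hx i (Subsingleton.elim _ _)⟩
    have hnoadj : ∀ a b : R, ¬ G.Adj a b := fun a b h => h.ne (Subsingleton.elim a b)
    have hA : G.adjMatrix ℂ
        = @Matrix.diagonal R ℂ (fun a b => Classical.propDecidable (a = b)) _
          (fun _ : R => (0 : ℂ)) := by
      ext a b
      simp [SimpleGraph.adjMatrix_apply, hnoadj a b, Matrix.diagonal_apply]
    convert_to @Matrix.charpoly ℂ _ R (fun a b => Classical.propDecidable (a = b)) _ (@Matrix.diagonal R ℂ (fun a b => Classical.propDecidable (a = b)) _ (fun _ : R => (0 : ℂ))) = _ using 1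
    · convert congrArg Matrix.charpoly hA
    refine (@charpoly_diagonal_aux R (fun a b => Classical.propDecidable (a = b)) _ ℂ _ (fun _ => (0 : ℂ))).trans ?_
    refine Finset.prod_congr rfl (fun g _ => ?_)
    congr 1
    simp
  · haveI : Nontrivial R := not_subsingleton_iff_nontrivial.mp hR
    have hn0 : n ≠ 0 := by
      rintro rfl
      have hzero : ∀ a : R, ψ a = 0 := by
        intro a
        have h1 : (Fintype.card R) • a = 0 := card_nsmul_eq_zero
        have h2 : (Fintype.card R) • ψ a = 0 := by rw [← map_nsmul, h1, map_zero]
        have h3 : (Fintype.card R : ZMod 0) * ψ a = 0 := by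
          rw [← nsmul_eq_mul]; exact h2
        haveI : NoZeroDivisors (ZMod 0) := inferInstanceAs (NoZeroDivisors ℤ)
        rcases mul_eq_zero.mp h3 with h | h
        · exact absurd h (Nat.cast_ne_zero.mpr Fintype.card_ne_zero)
        · exact h
      have htop : (⊤ : Ideal R) = ⊥ := hψ ⊤ (fun a _ => hzero a)
      have : (1 : R) = 0 := by
        have : (1 : R) ∈ (⊥ : Ideal R) := htop ▸ Submodule.mem_top
        simpa using this
      exact one_ne_zero this
    haveI : NeZero n := ⟨hn0⟩
    have hNne : ((Fintype.card R : ℂ)) ≠ 0 := Nat.cast_ne_zero.mpr Fintype.card_ne_zero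
    have hζn : ζ ^ n = 1 := hζ.pow_eq_one
    have hpow : ∀ m : ℕ, ζ ^ (m % n) = ζ ^ m := by
      intro m
      conv_rhs => rw [← Nat.mod_add_div m n]
      rw [pow_add, pow_mul, hζn, one_pow, mul_one]
    set χ : R → ℂ := fun r => ζ ^ (ψ r).val with hχ
    have hadd : ∀ a b : R, χ (a + b) = χ a * χ b := by
      intro a b
      simp only [hχ, map_add]
      rw [ZMod.val_add, hpow, pow_add]
    have hzero : χ 0 = 1 := by simp [hχ]
    have hsum0 : ∀ m : R, m ≠ 0 → ∑ t : R, χ (m * t) = 0 := by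
      intro m hm
      have hχne : ∃ t : R, χ (m * t) ≠ 1 := by
        by_contra hcon
        push_neg at hcon
        apply hm
        rw [← Ideal.span_singleton_eq_bot]
        apply hψ
        intro a ha
        obtain ⟨r, rfl⟩ := Ideal.mem_span_singleton'.mp ha
        by_contra h2
        have hlt : (ψ (r * m)).val < n := ZMod.val_lt _
        have hpos : 0 < (ψ (r * m)).val :=
          Nat.pos_of_ne_zero (fun h => h2 ((ZMod.val_eq_zero _).mp h))
        have hcr := hcon r
        rw [mul_comm m r] at hcr
        exact hζ.pow_ne_one_of_pos_of_lt hpos.ne' hlt hcr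
      obtain ⟨t₀, ht₀⟩ := hχne
      have hre : ∑ t : R, χ (m * (t₀ + t)) = ∑ t : R, χ (m * t) :=
        Fintype.sum_equiv (Equiv.addLeft t₀) _ _ (fun t => rfl)
      have heq : χ (m * t₀) * ∑ t : R, χ (m * t) = ∑ t : R, χ (m * t) := by
        rw [Finset.mul_sum, ← hre]
        refine Finset.sum_congr rfl (fun t _ => ?_)
        rw [← hadd, ← mul_add]
      have h2 : (χ (m * t₀) - 1) * ∑ t : R, χ (m * t) = 0 := by
        rw [sub_mul, one_mul, heq, sub_self]
      rcases mul_eq_zero.mp h2 with h | h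
      · exact absurd (sub_eq_zero.mp h) ht₀
      · exact h
    set U : Matrix R R ℂ := Matrix.of (fun g t => χ (g * t)) with hU
    set V : Matrix R R ℂ := Matrix.of
      (fun t h => ((Fintype.card R : ℂ))⁻¹ * χ (-(h * t))) with hV
    have horth : ∀ g h : R, ∑ t : R, χ (g * t) * χ (-(h * t))
        = if g = h then ((Fintype.card R : ℂ)) else 0 := by
      intro g h
      have hterm : ∀ t : R, χ (g * t) * χ (-(h * t)) = χ ((g - h) * t) := by
        intro t
        rw [← hadd]
        congr 1
        ring
      rw [Finset.sum_congr rfl (fun t _ => hterm t)]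
      by_cases hgh : g = h
      · subst hgh
        simp only [sub_self, zero_mul, hzero, if_true]
        simp [Finset.card_univ]
      · rw [if_neg hgh]
        exact hsum0 _ (sub_ne_zero.mpr hgh)
    have hUV : U * V = 1 := by
      ext g h
      rw [Matrix.mul_apply]
      have : ∀ t : R, U g t * V t h
          = ((Fintype.card R : ℂ))⁻¹ * (χ (g * t) * χ (-(h * t))) := by
        intro t
        simp only [hU, hV, Matrix.of_apply]
        ring
      rw [Finset.sum_congr rfl (fun t _ => this t), ← Finset.mul_sum, horth]
      by_cases hgh : g = h
      · subst hgh
        rw [if_pos rfl, inv_mul_cancel₀ hNne, Matrix.one_apply_eq]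
      · rw [if_neg hgh, mul_zero, (Matrix.one_apply_ne hgh).symm]
    have hVU : V * U = 1 := (Matrix.mul_eq_one_comm_of_equiv (Equiv.refl R)).mp hUV
    set S : Finset R := Finset.univ.filter
      (fun s => ∃ i, Ideal.span ({s} : Set R) = Ideal.span ({x i} : Set R)) with hS
    have hAdj : ∀ a b : R, G.Adj a b ↔ (a - b) ∈ S := by
      intro a b
      rw [hG, SimpleGraph.fromRel_adj]
      constructor
      · rintro ⟨hne, h | h⟩
        · exact Finset.mem_filter.mpr ⟨Finset.mem_univ _, h⟩
        · obtain ⟨i, hi⟩ := h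
          refine Finset.mem_filter.mpr ⟨Finset.mem_univ _, ⟨i, ?_⟩⟩
          rw [show a - b = -(b - a) by ring, Ideal.span_singleton_neg, hi]
      · intro h
        obtain ⟨i, hi⟩ := (Finset.mem_filter.mp h).2
        refine ⟨?_, Or.inl ⟨i, hi⟩⟩
        intro hab
        apply hx i
        rw [← Ideal.span_singleton_eq_bot, ← hi, hab, sub_self]
        simp
    set lam : R → ℂ := fun g => ∑ s ∈ S, χ (g * s) with hlam
    set D : Matrix R R ℂ := Matrix.diagonal lam with hD
    have hUA : U * (G.adjMatrix ℂ) = D * U := by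
      ext g t
      rw [Matrix.mul_apply, hD, Matrix.diagonal_mul]
      have hterm : ∀ t' : R, U g t' * (G.adjMatrix ℂ) t' t
          = if t' - t ∈ S then χ (g * t') else 0 := by
        intro t'
        rw [SimpleGraph.adjMatrix_apply]
        by_cases h : G.Adj t' t
        · rw [if_pos h, if_pos ((hAdj t' t).mp h), mul_one]; rfl
        · rw [if_neg h, if_neg (fun hs => h ((hAdj t' t).mpr hs)), mul_zero]
      rw [Finset.sum_congr rfl (fun t' _ => hterm t'), ← Finset.sum_filter]
      have hset : Finset.univ.filter (fun t' : R => t' - t ∈ S)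
          = S.map (Equiv.addRight t).toEmbedding := by
        ext t'
        simp only [Finset.mem_filter, Finset.mem_univ, true_and, Finset.mem_map,
          Equiv.coe_toEmbedding, Equiv.coe_addRight]
        constructor
        · intro h; exact ⟨t' - t, h, by ring⟩
        · rintro ⟨s, hs, rfl⟩; simpa using hs
      rw [hset, Finset.sum_map]
      simp only [Equiv.coe_toEmbedding, Equiv.coe_addRight]
      have : ∀ s : R, χ (g * (s + t)) = χ (g * s) * χ (g * t) := by
        intro s
        rw [mul_add, hadd]
      rw [Finset.sum_congr rfl (fun s _ => this s), ← Finset.sum_mul]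
      rfl
    have hAeq : G.adjMatrix ℂ = V * D * U := by
      calc G.adjMatrix ℂ = (V * U) * G.adjMatrix ℂ := by rw [hVU, one_mul]
        _ = V * (U * G.adjMatrix ℂ) := by rw [mul_assoc]
        _ = V * (D * U) := by rw [hUA]
        _ = V * D * U := by rw [mul_assoc]
    rw [hAeq, charpoly_conj_aux U V D hUV hVU, hD, charpoly_diagonal_aux]
    refine Finset.prod_congr rfl (fun g _ => ?_)
    congr 1
    congr 1
    -- lam g = ∑ i, ∑ u, ζ ^ (ψ (g * lift i u * x i)).val
    have hSunion : S = Finset.univ.biUnion (fun i : Fin k =>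
        Finset.univ.filter (fun s => Ideal.span ({s} : Set R) = Ideal.span ({x i} : Set R))) := by
      ext s
      simp [hS]
    have hdisj : ∀ i ∈ (Finset.univ : Finset (Fin k)), ∀ j ∈ (Finset.univ : Finset (Fin k)),
        i ≠ j → Disjoint
          (Finset.univ.filter (fun s => Ideal.span ({s} : Set R) = Ideal.span ({x i} : Set R)))
          (Finset.univ.filter (fun s => Ideal.span ({s} : Set R) = Ideal.span ({x j} : Set R))) := by
      intro i _ j _ hij
      rw [Finset.disjoint_left]
      intro s hsi hsj
      apply hij
      apply hinj
      have h1 := (Finset.mem_filter.mp hsi).2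
      have h2 := (Finset.mem_filter.mp hsj).2
      simp only
      rw [← h1, ← h2]
    rw [hlam]
    simp only
    rw [hSunion, Finset.sum_biUnion hdisj]
    refine Finset.sum_congr rfl (fun i _ => ?_)
    refine (Finset.sum_bij (fun (u : (R ⧸ Ideal.torsionOf R R (x i))ˣ) _ =>
      ((lift i u : Rˣ) : R) * x i) ?_ ?_ ?_ ?_).symm
    · intro u _
      refine Finset.mem_filter.mpr ⟨Finset.mem_univ _, ?_⟩
      exact Ideal.span_singleton_mul_left_unit (lift i u).isUnit _
    · intro u₁ _ u₂ _ heq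
      have hmem : ((lift i u₁ : Rˣ) : R) - ((lift i u₂ : Rˣ) : R)
          ∈ Ideal.torsionOf R R (x i) := by
        rw [Ideal.mem_torsionOf_iff, smul_eq_mul, sub_mul, sub_eq_zero]
        exact heq
      have hmk : Ideal.Quotient.mk (Ideal.torsionOf R R (x i)) ((lift i u₁ : Rˣ) : R)
          = Ideal.Quotient.mk (Ideal.torsionOf R R (x i)) ((lift i u₂ : Rˣ) : R) :=
        Ideal.Quotient.eq.mpr hmem
      rw [hlift i u₁, hlift i u₂] at hmk
      exact Units.ext hmk
    · intro s hs
      have hspan := (Finset.mem_filter.mp hs).2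
      have hs_mem : s ∈ Ideal.span ({x i} : Set R) := by
        rw [← hspan]; exact Ideal.mem_span_singleton_self s
      obtain ⟨r, hr⟩ := Ideal.mem_span_singleton'.mp hs_mem
      have hx_mem : x i ∈ Ideal.span ({s} : Set R) := by
        rw [hspan]; exact Ideal.mem_span_singleton_self _
      obtain ⟨r', hr'⟩ := Ideal.mem_span_singleton'.mp hx_mem
      have hunit : Ideal.Quotient.mk (Ideal.torsionOf R R (x i)) r *
          Ideal.Quotient.mk (Ideal.torsionOf R R (x i)) r' = 1 := by
        rw [← map_mul, ← map_one (Ideal.Quotient.mk (Ideal.torsionOf R R (x i))),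
          Ideal.Quotient.eq]
        rw [Ideal.mem_torsionOf_iff, smul_eq_mul, sub_mul, one_mul, sub_eq_zero]
        calc r * r' * x i = r' * (r * x i) := by ring
          _ = r' * s := by rw [hr]
          _ = x i := hr'
      refine ⟨Units.mkOfMulEqOne _ _ hunit, Finset.mem_univ _, ?_⟩
      have hmk : Ideal.Quotient.mk (Ideal.torsionOf R R (x i))
          ((lift i (Units.mkOfMulEqOne _ _ hunit) : Rˣ) : R)
          = Ideal.Quotient.mk (Ideal.torsionOf R R (x i)) r := by
        rw [hlift]
        rfl
      have hmem : ((lift i (Units.mkOfMulEqOne _ _ hunit) : Rˣ) : R) - r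
          ∈ Ideal.torsionOf R R (x i) := Ideal.Quotient.eq.mp hmk
      rw [Ideal.mem_torsionOf_iff, smul_eq_mul, sub_mul, sub_eq_zero] at hmem
      exact hmem.trans hr
    · intro u _
      rw [hχ]
      simp only
      rw [← mul_assoc]
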